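/- Generalized gap condition. Let N be a quantum channel with complementary channel N^c. Suppose σ is an optimal state for N (i.e. I_c(σ,N) = Q^(1)(N)), and suppose there exists a quantum state ρ and a real number r > 0 such that I_c(ρ, N^c) > 0 and σ − r·ρ is positive semidefinite. Then Q^(1)(N) < P^(1)(N). -/

import Mathlib

open Matrix BigOperators Kronecker
open scoped ComplexOrder

/-- von Neumann entropy of a matrix: `-∑ μ_k log μ_k` over the eigenvalues
(junk value `0` if the matrix is not Hermitian). Note `Real.log 0 = 0`. -/
noncomputable def vNEntropy {n : Type*} [Fintype n] [DecidableEq n]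
    (σ : Matrix n n ℂ) : ℝ :=
  if h : σ.IsHermitian then -∑ k, (h.eigenvalues k) * Real.log (h.eigenvalues k) else 0

/-- `K` is a family of Kraus operators for a quantum channel. -/
def IsKraus {dA dB ι : Type*} [Fintype dA] [DecidableEq dA] [Fintype dB] [Fintype ι]
    (K : ι → Matrix dB dA ℂ) : Prop :=
  ∑ i, (K i)ᴴ * K i = 1

/-- Action `X ↦ ∑ i, K i * X * (K i)ᴴ` of the channel with Kraus operators `K`. -/
noncomputable def chanOut {dA dB ι : Type*} [Fintype dA] [Fintype dB] [Fintype ι]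
    (K : ι → Matrix dB dA ℂ) (X : Matrix dA dA ℂ) : Matrix dB dB ℂ :=
  ∑ i, K i * X * (K i)ᴴ

/-- Action of the complementary channel: `(N^c(X))_{ij} = Tr (K i * X * (K j)ᴴ)`. -/
noncomputable def compOut {dA dB ι : Type*} [Fintype dA] [Fintype dB] [Fintype ι]
    (K : ι → Matrix dB dA ℂ) (X : Matrix dA dA ℂ) : Matrix ι ι ℂ :=
  Matrix.of fun i j => Matrix.trace (K i * X * (K j)ᴴ)

/-- A quantum state: positive semidefinite with trace one. -/
def IsQState {n : Type*} [Fintype n] (ρ : Matrix n n ℂ) : Prop :=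
  ρ.PosSemidef ∧ ρ.trace = 1

/-- Coherent information `I_c(ρ, N) = S(N(ρ)) - S(N^c(ρ))`. -/
noncomputable def cohInfo {dA dB ι : Type*} [Fintype dA] [Fintype dB] [DecidableEq dB]
    [Fintype ι] [DecidableEq ι] (K : ι → Matrix dB dA ℂ) (ρ : Matrix dA dA ℂ) : ℝ :=
  vNEntropy (chanOut K ρ) - vNEntropy (compOut K ρ)

/-- One-shot quantum capacity: `Q¹(N) = sup_ρ I_c(ρ, N)` over all states `ρ`. -/
noncomputable def Q1 {dA dB ι : Type*} [Fintype dA] [Fintype dB] [DecidableEq dB]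
    [Fintype ι] [DecidableEq ι] (K : ι → Matrix dB dA ℂ) : ℝ :=
  sSup {x : ℝ | ∃ ρ : Matrix dA dA ℂ, IsQState ρ ∧ cohInfo K ρ = x}

/-- Kraus operators of the tensor product channel `N₁ ⊗ N₂`. -/
noncomputable def tensorKraus {dA₁ dB₁ ι₁ dA₂ dB₂ ι₂ : Type*}
    (K1 : ι₁ → Matrix dB₁ dA₁ ℂ) (K2 : ι₂ → Matrix dB₂ dA₂ ℂ) :
    ι₁ × ι₂ → Matrix (dB₁ × dB₂) (dA₁ × dA₂) ℂ :=
  fun p => K1 p.1 ⊗ₖ K2 p.2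

/-- `IsEnsemble p σs` : the `p i` form a probability vector and each `σs i` is a state. -/
def IsEnsemble {dA : Type*} [Fintype dA] {n : ℕ} (p : Fin n → ℝ)
    (σs : Fin n → Matrix dA dA ℂ) : Prop :=
  (∀ i, 0 ≤ p i) ∧ ∑ i, p i = 1 ∧ ∀ i, IsQState (σs i)

/-- Private information of an ensemble:
`I_p({p_i, ρ_i}, N) = I_c(∑ p_i ρ_i, N) - ∑ p_i I_c(ρ_i, N)`. -/
noncomputable def privInfo {dA dB ι : Type*} [Fintype dA] [Fintype dB] [DecidableEq dB]
    [Fintype ι] [DecidableEq ι] (K : ι → Matrix dB dA ℂ) {n : ℕ} (p : Fin n → ℝ)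
    (σs : Fin n → Matrix dA dA ℂ) : ℝ :=
  cohInfo K (∑ i, (p i : ℂ) • σs i) - ∑ i, p i * cohInfo K (σs i)

/-- One-shot private capacity: the supremum of the private information over all ensembles. -/
noncomputable def P1 {dA dB ι : Type*} [Fintype dA] [Fintype dB] [DecidableEq dB]
    [Fintype ι] [DecidableEq ι] (K : ι → Matrix dB dA ℂ) : ℝ :=
  sSup {x : ℝ | ∃ (n : ℕ) (p : Fin n → ℝ) (σs : Fin n → Matrix dA dA ℂ),
    IsEnsemble p σs ∧ privInfo K p σs = x}

/-- Coherent information of the complementary channel: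
`I_c(ρ, N^c) = S(N^c(ρ)) - S(N(ρ))`. -/
noncomputable def cohInfoComp {dA dB ι : Type*} [Fintype dA] [Fintype dB] [DecidableEq dB]
    [Fintype ι] [DecidableEq ι] (K : ι → Matrix dB dA ℂ) (ρ : Matrix dA dA ℂ) : ℝ :=
  vNEntropy (compOut K ρ) - vNEntropy (chanOut K ρ)


section Aux
open Polynomial

lemma charpoly_conj {n : Type*} [Fintype n] [DecidableEq n]
    (U V M : Matrix n n ℂ) (hUV : U * V = 1) :
    (U * M * V).charpoly = M.charpoly := by
  have hVU : V * U = 1 := mul_eq_one_comm.mp hUV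
  set U' := C.mapMatrix U with hU'
  set V' := C.mapMatrix V with hV'
  have hUV' : U' * V' = 1 := by rw [hU', hV', ← _root_.map_mul, hUV, _root_.map_one]
  have hVU' : V' * U' = 1 := by rw [hU', hV', ← _root_.map_mul, hVU, _root_.map_one]
  unfold Matrix.charpoly
  have h1 : charmatrix (U * M * V) = U' * charmatrix M * V' := by
    unfold charmatrix
    have h2 : C.mapMatrix (U * M * V) = U' * C.mapMatrix M * V' := by
      rw [_root_.map_mul, _root_.map_mul]
    have h3 : Matrix.scalar n (X : ℂ[X]) = U' * Matrix.scalar n (X : ℂ[X]) * V' := by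
      rw [← (Matrix.scalar_commute (X : ℂ[X]) (fun r' => Commute.all _ _) U').eq,
        mul_assoc, hUV', mul_one]
    rw [h2]
    conv_lhs => rw [h3]
    rw [Matrix.mul_sub, Matrix.sub_mul]
  rw [h1, det_mul, det_mul]
  have : U'.det * (charmatrix M).det * V'.det = (charmatrix M).det * (U' * V').det := by
    rw [det_mul]; ring
  rw [this, hUV', det_one, mul_one]

lemma charpoly_diagonal {n : Type*} [Fintype n] [DecidableEq n] (d : n → ℂ) :
    (diagonal d).charpoly = ∏ k, (X - C (d k)) := by
  unfold Matrix.charpoly charmatrix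
  have : Matrix.scalar n (X : ℂ[X]) - C.mapMatrix (diagonal d)
      = diagonal (fun k => X - C (d k)) := by
    rw [RingHom.mapMatrix_apply, Matrix.diagonal_map (map_zero C), ← diagonal_sub]
    rfl
  rw [this, det_diagonal]

lemma charpoly_hermitian {n : Type*} [Fintype n] [DecidableEq n]
    {M : Matrix n n ℂ} (hM : M.IsHermitian) :
    M.charpoly = ∏ k, (X - C ((hM.eigenvalues k : ℂ))) := by
  conv_lhs => rw [hM.spectral_theorem, Unitary.conjStarAlgAut_apply]
  rw [charpoly_conj _ _ _ (by
    simpa using (Matrix.mem_unitaryGroup_iff.mp (hM.eigenvectorUnitary).2)),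
    _root_.charpoly_diagonal]
  rfl

lemma charpoly_transpose {n : Type*} [Fintype n] [DecidableEq n] (M : Matrix n n ℂ) :
    Mᵀ.charpoly = M.charpoly := by
  unfold Matrix.charpoly charmatrix
  rw [← Matrix.det_transpose (Matrix.scalar n (X:ℂ[X]) - C.mapMatrix M)]
  congr 1
  rw [Matrix.transpose_sub]
  congr 1
  unfold Matrix.scalar
  simp [Matrix.diagonal_transpose]

lemma eval_charpoly {n : Type*} [Fintype n] [DecidableEq n] (M : Matrix n n ℂ) (z : ℂ) :
    M.charpoly.eval z = (z • (1 : Matrix n n ℂ) - M).det := by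
  unfold Matrix.charpoly
  have h : (evalRingHom z) (charmatrix M).det = ((charmatrix M).map (evalRingHom z)).det :=
    RingHom.map_det (evalRingHom z) (charmatrix M)
  rw [show (charmatrix M).det.eval z = (evalRingHom z) (charmatrix M).det from rfl, h]
  congr 1
  ext i j
  by_cases hij : i = j
  · subst hij
    simp [charmatrix_apply_eq, Matrix.sub_apply, Matrix.smul_apply, Matrix.one_apply]
  · simp [charmatrix_apply_ne _ _ _ hij, Matrix.sub_apply, Matrix.smul_apply,
      Matrix.one_apply, hij]

lemma charpoly_mul_conjTranspose_comm {m n : Type*} [Fintype m] [DecidableEq m]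
    [Fintype n] [DecidableEq n] (A : Matrix m n ℂ) :
    X ^ (Fintype.card n) * (A * Aᴴ).charpoly = X ^ (Fintype.card m) * (Aᴴ * A).charpoly := by
  apply Polynomial.eq_of_infinite_eval_eq
  apply Set.Infinite.mono (s := {z : ℂ | z ≠ 0})
  · intro z hz
    have hz : z ≠ 0 := hz
    simp only [Set.mem_setOf_eq, eval_mul, eval_pow, eval_X, _root_.eval_charpoly]
    have h1 : z • (1 : Matrix m m ℂ) - A * Aᴴ = z • ((1 : Matrix m m ℂ) - (z⁻¹ • A) * Aᴴ) := by
      rw [smul_sub, Matrix.smul_mul, smul_smul, mul_inv_cancel₀ hz, one_smul]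
    have h2 : z • (1 : Matrix n n ℂ) - Aᴴ * A = z • ((1 : Matrix n n ℂ) - Aᴴ * (z⁻¹ • A)) := by
      rw [smul_sub, Matrix.mul_smul, smul_smul, mul_inv_cancel₀ hz, one_smul]
    rw [h1, h2, Matrix.det_smul, Matrix.det_smul, Matrix.det_one_sub_mul_comm]
    ring
  · have : ({0} : Set ℂ).Finite := Set.finite_singleton 0
    exact this.infinite_compl

lemma keyGen_roots {k : Type*} [Fintype k] (f : k → ℝ) :
    (∏ j, (X - C ((f j : ℝ) : ℂ))).roots = Finset.univ.val.map (fun j => ((f j : ℝ) : ℂ)) := by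
  rw [Finset.prod_eq_multiset_prod]
  have he : (fun j : k => X - C ((f j : ℝ) : ℂ))
      = (fun a : ℂ => X - C a) ∘ (fun j : k => ((f j : ℝ) : ℂ)) := rfl
  rw [he, ← Multiset.map_map, Polynomial.roots_multiset_prod_X_sub_C]

lemma convert_sum_aux {k : Type*} [Fintype k] (f : k → ℝ) :
    (Multiset.map (fun z : ℂ => z.re * Real.log z.re)
        (Multiset.map (fun j : k => ((f j : ℝ) : ℂ)) Finset.univ.val)).sum
      = ∑ j, f j * Real.log (f j) := by
  rw [Multiset.map_map, Finset.sum_eq_multiset_sum]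
  congr 1

lemma vNEntropy_eq_of_charpoly {m n : Type*} [Fintype m] [DecidableEq m]
    [Fintype n] [DecidableEq n] {M : Matrix m m ℂ} {N : Matrix n n ℂ}
    (hM : M.IsHermitian) (hN : N.IsHermitian)
    (h : X ^ (Fintype.card n) * M.charpoly = X ^ (Fintype.card m) * N.charpoly) :
    vNEntropy M = vNEntropy N := by
  classical
  have keyM : M.charpoly.roots = Finset.univ.val.map (fun k => ((hM.eigenvalues k : ℝ) : ℂ)) := by
    rw [charpoly_hermitian hM, keyGen_roots]
  have keyN : N.charpoly.roots = Finset.univ.val.map (fun k => ((hN.eigenvalues k : ℝ) : ℂ)) := by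
    rw [charpoly_hermitian hN, keyGen_roots]
  have hMne : M.charpoly ≠ 0 := (Matrix.charpoly_monic M).ne_zero
  have hNne : N.charpoly ≠ 0 := (Matrix.charpoly_monic N).ne_zero
  have hroots : (Fintype.card n) • ({(0:ℂ)} : Multiset ℂ)
        + Finset.univ.val.map (fun k => ((hM.eigenvalues k : ℝ) : ℂ))
      = (Fintype.card m) • ({(0:ℂ)} : Multiset ℂ)
        + Finset.univ.val.map (fun k => ((hN.eigenvalues k : ℝ) : ℂ)) := by
    have := congrArg Polynomial.roots h
    rwa [Polynomial.roots_mul (mul_ne_zero (pow_ne_zero _ Polynomial.X_ne_zero) hMne),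
      Polynomial.roots_mul (mul_ne_zero (pow_ne_zero _ Polynomial.X_ne_zero) hNne),
      Polynomial.roots_pow, Polynomial.roots_pow, Polynomial.roots_X, keyM, keyN] at this
  have hsum := congrArg (fun s : Multiset ℂ =>
    ((s.map (fun z : ℂ => z.re * Real.log z.re)).sum : ℝ)) hroots
  simp only [Multiset.map_add, Multiset.sum_add, Multiset.map_nsmul,
    Multiset.nsmul_singleton, Multiset.map_replicate, Multiset.sum_replicate,
    Complex.zero_re, Real.log_zero, mul_zero, zero_mul,
    smul_zero, zero_add] at hsum
  rw [convert_sum_aux, convert_sum_aux] at hsum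
  rw [vNEntropy, vNEntropy, dif_pos hM, dif_pos hN, hsum]

lemma vNEntropy_transpose {n : Type*} [Fintype n] [DecidableEq n]
    {M : Matrix n n ℂ} (hM : M.IsHermitian) : vNEntropy Mᵀ = vNEntropy M :=
  vNEntropy_eq_of_charpoly hM.transpose hM (by rw [_root_.charpoly_transpose])

lemma vNEntropy_AAH_eq_AHA {m n : Type*} [Fintype m] [DecidableEq m]
    [Fintype n] [DecidableEq n] (A : Matrix m n ℂ) :
    vNEntropy (A * Aᴴ) = vNEntropy (Aᴴ * A) :=
  vNEntropy_eq_of_charpoly (Matrix.isHermitian_mul_conjTranspose_self A)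
    (by simpa using Matrix.isHermitian_mul_conjTranspose_self Aᴴ)
    (charpoly_mul_conjTranspose_comm A)

lemma chanOut_pure {dA dB ι : Type*} [Fintype dA] [Fintype dB] [Fintype ι]
    (K : ι → Matrix dB dA ℂ) (v : dA → ℂ) :
    chanOut K (vecMulVec v (star v))
      = (Matrix.of fun b i => ((K i) *ᵥ v) b) * (Matrix.of fun b i => ((K i) *ᵥ v) b)ᴴ := by
  ext b c
  simp only [chanOut, Matrix.sum_apply, Matrix.mul_apply, Matrix.conjTranspose_apply,
    Matrix.of_apply, Matrix.vecMulVec_apply, Matrix.mulVec, dotProduct,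
    Pi.star_apply, star_sum, star_mul', RCLike.star_def]
  apply Finset.sum_congr rfl
  intro i _
  rw [Finset.sum_mul_sum]
  rw [Finset.sum_comm]
  apply Finset.sum_congr rfl; intro a _
  rw [Finset.sum_mul]
  apply Finset.sum_congr rfl; intro a' _
  ring

lemma compOut_pure {dA dB ι : Type*} [Fintype dA] [Fintype dB] [Fintype ι]
    (K : ι → Matrix dB dA ℂ) (v : dA → ℂ) :
    compOut K (vecMulVec v (star v))
      = ((Matrix.of fun b i => ((K i) *ᵥ v) b)ᴴ * (Matrix.of fun b i => ((K i) *ᵥ v) b))ᵀ := by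
  ext i j
  simp only [compOut, Matrix.of_apply, Matrix.trace, Matrix.diag_apply, Matrix.transpose_apply,
    Matrix.mul_apply, Matrix.conjTranspose_apply, Matrix.vecMulVec_apply, Matrix.mulVec,
    dotProduct, Pi.star_apply, star_sum, star_mul', RCLike.star_def]
  apply Finset.sum_congr rfl; intro b _
  rw [Finset.sum_mul_sum]
  simp only [Finset.sum_mul]
  apply Finset.sum_congr rfl; intro y _
  apply Finset.sum_congr rfl; intro a _
  ring

lemma cohInfo_pure {dA dB ι : Type*} [Fintype dA] [Fintype dB] [DecidableEq dB]
    [Fintype ι] [DecidableEq ι] (K : ι → Matrix dB dA ℂ) (v : dA → ℂ) :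
    cohInfo K (vecMulVec v (star v)) = 0 := by
  rw [cohInfo, chanOut_pure, compOut_pure,
    vNEntropy_transpose (by simpa using Matrix.isHermitian_mul_conjTranspose_self (Matrix.of fun b i => ((K i) *ᵥ v) b)ᴴ),
    vNEntropy_AAH_eq_AHA, sub_self]

lemma psd_diag_nonneg {n : Type*} [Fintype n] {M : Matrix n n ℂ}
    (hM : M.PosSemidef) (i : n) : 0 ≤ M i i := by
  classical
  have h := hM.dotProduct_mulVec_nonneg (Pi.single i 1)
  simpa [dotProduct, Matrix.mulVec_single, Pi.single_apply, apply_ite,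
    Finset.sum_ite_eq'] using h

lemma psd_trace_nonneg {n : Type*} [Fintype n] {M : Matrix n n ℂ}
    (hM : M.PosSemidef) : 0 ≤ M.trace := by
  rw [Matrix.trace]
  exact Finset.sum_nonneg fun i _ => psd_diag_nonneg hM i

lemma trace_eq_sum_eigenvalues {n : Type*} [Fintype n] [DecidableEq n]
    {M : Matrix n n ℂ} (hM : M.IsHermitian) :
    M.trace = ∑ k, (hM.eigenvalues k : ℂ) := by
  conv_lhs => rw [hM.spectral_theorem, Unitary.conjStarAlgAut_apply]
  rw [Matrix.trace_mul_cycle,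
    show (star (hM.eigenvectorUnitary : Matrix n n ℂ)) * (hM.eigenvectorUnitary : Matrix n n ℂ) = 1 from
      Matrix.mem_unitaryGroup_iff'.mp hM.eigenvectorUnitary.2,
    one_mul, Matrix.trace_diagonal]
  rfl

lemma sum_eigenvalues_eq_of_trace {n : Type*} [Fintype n] [DecidableEq n]
    {M : Matrix n n ℂ} (hM : M.IsHermitian) {t : ℝ} (ht : M.trace = (t : ℂ)) :
    ∑ k, hM.eigenvalues k = t := by
  have := (trace_eq_sum_eigenvalues hM).symm.trans ht
  exact_mod_cast this

lemma xlogx_bounds {x : ℝ} (h0 : 0 ≤ x) (h1 : x ≤ 1) :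
    -1 ≤ x * Real.log x ∧ x * Real.log x ≤ 0 := by
  constructor
  · rcases eq_or_lt_of_le h0 with h | h
    · simp [← h]
    · have hl : 1 - x⁻¹ ≤ Real.log x := Real.one_sub_inv_le_log_of_pos h
      have := mul_le_mul_of_nonneg_left hl (le_of_lt h)
      have hx : x * (1 - x⁻¹) = x - 1 := by field_simp
      nlinarith
  · exact mul_nonpos_iff.mpr (Or.inl ⟨h0, Real.log_nonpos h0 h1⟩)

lemma vNEntropy_state_bounds {n : Type*} [Fintype n] [DecidableEq n]
    {M : Matrix n n ℂ} (h : M.PosSemidef) (ht : M.trace = 1) :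
    0 ≤ vNEntropy M ∧ vNEntropy M ≤ Fintype.card n := by
  have hsum : ∑ k, h.1.eigenvalues k = 1 :=
    sum_eigenvalues_eq_of_trace h.1 (by rw [ht]; norm_num)
  have hnn : ∀ k, 0 ≤ h.1.eigenvalues k := h.eigenvalues_nonneg
  have hle1 : ∀ k, h.1.eigenvalues k ≤ 1 := by
    intro k
    rw [← hsum]
    exact Finset.single_le_sum (fun j _ => hnn j) (Finset.mem_univ k)
  rw [vNEntropy, dif_pos h.1]
  constructor
  · rw [neg_nonneg]
    exact Finset.sum_nonpos fun k _ => (xlogx_bounds (hnn k) (hle1 k)).2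
  · rw [neg_le]
    have hc : -(Fintype.card n : ℝ) = ∑ _k : n, (-1 : ℝ) := by simp
    rw [hc]
    exact Finset.sum_le_sum fun k _ => (xlogx_bounds (hnn k) (hle1 k)).1

lemma chanOut_trace {dA dB ι : Type*} [Fintype dA] [DecidableEq dA] [Fintype dB] [Fintype ι]
    (K : ι → Matrix dB dA ℂ) (hK : IsKraus K) (ρ : Matrix dA dA ℂ) :
    (chanOut K ρ).trace = ρ.trace := by
  rw [chanOut, Matrix.trace_sum]
  have h : ∀ i, (K i * ρ * (K i)ᴴ).trace = ((K i)ᴴ * K i * ρ).trace := by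
    intro i; rw [Matrix.trace_mul_cycle]
  rw [Finset.sum_congr rfl fun i _ => h i, ← Matrix.trace_sum, ← Matrix.sum_mul, hK, one_mul]

lemma compOut_trace {dA dB ι : Type*} [Fintype dA] [DecidableEq dA] [Fintype dB] [Fintype ι]
    (K : ι → Matrix dB dA ℂ) (hK : IsKraus K) (ρ : Matrix dA dA ℂ) :
    (compOut K ρ).trace = ρ.trace := by
  rw [Matrix.trace]
  have h : ∀ i, (compOut K ρ).diag i = ((K i)ᴴ * K i * ρ).trace := by
    intro i
    rw [Matrix.diag_apply]
    show (K i * ρ * (K i)ᴴ).trace = _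
    rw [Matrix.trace_mul_cycle]
  rw [Finset.sum_congr rfl fun i _ => h i, ← Matrix.trace_sum, ← Matrix.sum_mul, hK, one_mul]

lemma chanOut_posSemidef {dA dB ι : Type*} [Fintype dA] [Fintype dB] [Fintype ι]
    (K : ι → Matrix dB dA ℂ) {ρ : Matrix dA dA ℂ} (hρ : ρ.PosSemidef) :
    (chanOut K ρ).PosSemidef := by
  rw [chanOut]
  apply Finset.sum_induction _ (fun M : Matrix dB dB ℂ => M.PosSemidef)
    (fun a b ha hb => ha.add hb) Matrix.PosSemidef.zero
  intro i _
  exact hρ.mul_mul_conjTranspose_same (K i)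

lemma compOut_posSemidef {dA dB ι : Type*} [Fintype dA] [Fintype dB] [Fintype ι]
    [DecidableEq ι] (K : ι → Matrix dB dA ℂ) {ρ : Matrix dA dA ℂ} (hρ : ρ.PosSemidef) :
    (compOut K ρ).PosSemidef := by
  refine Matrix.PosSemidef.of_dotProduct_mulVec_nonneg ?_ ?_
  · ext i j
    show star (compOut K ρ j i) = compOut K ρ i j
    show star ((K j * ρ * (K i)ᴴ).trace) = (K i * ρ * (K j)ᴴ).trace
    rw [← Matrix.trace_conjTranspose]
    congr 1
    rw [Matrix.conjTranspose_mul, Matrix.conjTranspose_mul, Matrix.conjTranspose_conjTranspose,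
      hρ.1.eq]
    exact (Matrix.mul_assoc (K i) ρ ((K j)ᴴ)).symm
  · intro x
    set B : Matrix dB dA ℂ := ∑ i, (star (x i)) • K i with hB
    have hBH : Bᴴ = ∑ j, (x j) • (K j)ᴴ := by
      rw [hB, Matrix.conjTranspose_sum]
      apply Finset.sum_congr rfl; intro j _
      rw [Matrix.conjTranspose_smul, star_star]
    have h0 : B * ρ = ∑ i, star (x i) • (K i * ρ) := by
      rw [hB, Matrix.sum_mul]
      apply Finset.sum_congr rfl; intro i _
      rw [Matrix.smul_mul]
    have h1 : B * ρ * Bᴴ = ∑ i, ∑ j, (star (x i) * x j) • (K i * ρ * (K j)ᴴ) := by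
      rw [h0, hBH, Matrix.sum_mul]
      apply Finset.sum_congr rfl; intro i _
      rw [Matrix.smul_mul, Matrix.mul_sum, Finset.smul_sum]
      apply Finset.sum_congr rfl; intro j _
      rw [Matrix.mul_smul, smul_smul]
    have htr : star x ⬝ᵥ (compOut K ρ) *ᵥ x = (B * ρ * Bᴴ).trace := by
      rw [h1, Matrix.trace_sum]
      have : ∀ i, (∑ j, (star (x i) * x j) • (K i * ρ * (K j)ᴴ)).trace
          = ∑ j, (star (x i) * x j) * (K i * ρ * (K j)ᴴ).trace := by
        intro i
        rw [Matrix.trace_sum]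
        apply Finset.sum_congr rfl; intro j _
        rw [Matrix.trace_smul, smul_eq_mul]
      rw [Finset.sum_congr rfl fun i _ => this i]
      simp only [dotProduct, Matrix.mulVec, Pi.star_apply, compOut, Matrix.of_apply,
        Finset.mul_sum]
      apply Finset.sum_congr rfl; intro i _
      apply Finset.sum_congr rfl; intro j _
      ring
    rw [htr]
    exact psd_trace_nonneg (hρ.mul_mul_conjTranspose_same B)

lemma smul_posSemidef {n : Type*} [Fintype n] {c : ℝ} (hc : 0 ≤ c)
    {M : Matrix n n ℂ} (h : M.PosSemidef) : ((c : ℂ) • M).PosSemidef := by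
  refine Matrix.PosSemidef.of_dotProduct_mulVec_nonneg ?_ ?_
  · show ((c:ℂ) • M)ᴴ = (c:ℂ) • M
    rw [Matrix.conjTranspose_smul, Complex.star_def, Complex.conj_ofReal, h.1.eq]
  · intro x
    rw [Matrix.smul_mulVec, dotProduct_smul, smul_eq_mul]
    exact mul_nonneg (by exact_mod_cast Complex.zero_le_real.mpr hc) (h.dotProduct_mulVec_nonneg x)

lemma avg_isQState {dA : Type*} [Fintype dA] {n : ℕ} {p : Fin n → ℝ}
    {σs : Fin n → Matrix dA dA ℂ} (he : IsEnsemble p σs) :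
    IsQState (∑ i, (p i : ℂ) • σs i) := by
  obtain ⟨hp, hps, hst⟩ := he
  constructor
  · apply Finset.sum_induction _ (fun M : Matrix dA dA ℂ => M.PosSemidef)
      (fun a b ha hb => ha.add hb) Matrix.PosSemidef.zero
    intro i _
    exact smul_posSemidef (hp i) (hst i).1
  · rw [Matrix.trace_sum]
    have : ∀ i, ((p i : ℂ) • σs i).trace = (p i : ℂ) := by
      intro i
      rw [Matrix.trace_smul, (hst i).2, smul_eq_mul, mul_one]
    rw [Finset.sum_congr rfl fun i _ => this i]
    push_cast [hps]
    norm_num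
    exact_mod_cast congrArg (Complex.ofReal) hps

lemma cohInfo_state_bounds {dA dB ι : Type*} [Fintype dA] [DecidableEq dA] [Fintype dB]
    [DecidableEq dB] [Fintype ι] [DecidableEq ι]
    (K : ι → Matrix dB dA ℂ) (hK : IsKraus K) {ρ : Matrix dA dA ℂ} (h : IsQState ρ) :
    -(Fintype.card ι : ℝ) ≤ cohInfo K ρ ∧ cohInfo K ρ ≤ Fintype.card dB := by
  have h1 := vNEntropy_state_bounds (chanOut_posSemidef K h.1)
    (by rw [chanOut_trace K hK, h.2])
  have h2 := vNEntropy_state_bounds (compOut_posSemidef K h.1)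
    (by rw [compOut_trace K hK, h.2])
  rw [cohInfo]
  constructor <;> [linarith [h1.1, h2.2]; linarith [h1.2, h2.1]]

lemma P1_bddAbove {dA dB ι : Type*} [Fintype dA] [DecidableEq dA] [Fintype dB]
    [DecidableEq dB] [Fintype ι] [DecidableEq ι]
    (K : ι → Matrix dB dA ℂ) (hK : IsKraus K) :
    BddAbove {x : ℝ | ∃ (n : ℕ) (p : Fin n → ℝ) (σs : Fin n → Matrix dA dA ℂ),
      IsEnsemble p σs ∧ privInfo K p σs = x} := by
  refine ⟨(Fintype.card dB : ℝ) + Fintype.card ι, ?_⟩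
  rintro x ⟨n, p, σs, he, rfl⟩
  rw [privInfo]
  have h1 := (cohInfo_state_bounds K hK (avg_isQState he)).2
  have h2 : -(Fintype.card ι : ℝ) ≤ ∑ i, p i * cohInfo K (σs i) := by
    have : ∀ i ∈ Finset.univ, p i * (-(Fintype.card ι : ℝ)) ≤ p i * cohInfo K (σs i) :=
      fun i _ => mul_le_mul_of_nonneg_left (cohInfo_state_bounds K hK (he.2.2 i)).1 (he.1 i)
    calc -(Fintype.card ι : ℝ) = ∑ i, p i * (-(Fintype.card ι : ℝ)) := by
          rw [← Finset.sum_mul, he.2.1, one_mul]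
      _ ≤ _ := Finset.sum_le_sum this
  linarith

lemma le_P1 {dA dB ι : Type*} [Fintype dA] [DecidableEq dA] [Fintype dB]
    [DecidableEq dB] [Fintype ι] [DecidableEq ι]
    (K : ι → Matrix dB dA ℂ) (hK : IsKraus K) {n : ℕ} {p : Fin n → ℝ}
    {σs : Fin n → Matrix dA dA ℂ} (he : IsEnsemble p σs) :
    privInfo K p σs ≤ P1 K :=
  le_csSup (P1_bddAbove K hK) ⟨n, p, σs, he, rfl⟩

lemma unitary_conj_diag_eq_sum {n : Type*} [Fintype n] [DecidableEq n]
    (U : Matrix n n ℂ) (d : n → ℂ) :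
    U * diagonal d * Uᴴ = ∑ k, d k • vecMulVec (fun a => U a k) (star fun b => U b k) := by
  ext a b
  simp only [Matrix.mul_apply, Matrix.mul_diagonal, Matrix.conjTranspose_apply,
    Matrix.sum_apply, Matrix.smul_apply, Matrix.vecMulVec_apply, Pi.star_apply,
    smul_eq_mul]
  apply Finset.sum_congr rfl; intro k _
  simp only [Matrix.diagonal_apply, mul_ite, ite_mul, mul_zero, zero_mul,
    Finset.sum_ite_eq, Finset.sum_ite_eq', Finset.mem_univ, if_true]
  ring

lemma vecMulVec_isQState {n : Type*} [Fintype n] (v : n → ℂ)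
    (hv : ∑ a, star (v a) * v a = 1) : IsQState (vecMulVec v (star v)) := by
  refine ⟨Matrix.PosSemidef.of_dotProduct_mulVec_nonneg ?_ ?_, ?_⟩
  · ext i j
    simp only [Matrix.conjTranspose_apply, Matrix.vecMulVec_apply, Pi.star_apply, star_mul',
      star_star]
    ring
  · intro x
    have hcalc : star x ⬝ᵥ (vecMulVec v (star v)) *ᵥ x
        = (∑ a, star (x a) * v a) * star (∑ a, star (x a) * v a) := by
      simp only [dotProduct, Matrix.mulVec, Matrix.vecMulVec_apply, Pi.star_apply,
        star_sum, star_mul', star_star]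
      rw [Finset.sum_mul_sum]
      apply Finset.sum_congr rfl; intro a _
      rw [Finset.mul_sum]
      apply Finset.sum_congr rfl; intro b _
      ring
    rw [hcalc]
    exact mul_star_self_nonneg _
  · show (vecMulVec v (star v)).trace = 1
    rw [Matrix.trace]
    rw [← hv]
    apply Finset.sum_congr rfl; intro a _
    simp only [Matrix.diag_apply, Matrix.vecMulVec_apply, Pi.star_apply]
    ring

end Aux

/-- **Generalized gap condition.** If `σ` is an optimal state for `N` and there is a state
`ρ` and `r > 0` with `I_c(ρ, N^c) > 0` and `σ - r·ρ` positive semidefinite, then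
`Q¹(N) < P¹(N)`. -/
theorem quantum_lt_private_of_comp_positive {dA dB ι : Type*}
    [Fintype dA] [DecidableEq dA] [Fintype dB] [DecidableEq dB]
    [Fintype ι] [DecidableEq ι]
    (K : ι → Matrix dB dA ℂ) (hK : IsKraus K)
    (σ : Matrix dA dA ℂ) (hσ : IsQState σ) (hopt : cohInfo K σ = Q1 K)
    (ρ : Matrix dA dA ℂ) (hρ : IsQState ρ)
    (r : ℝ) (hr : 0 < r)
    (hcomp : cohInfoComp K ρ > 0)
    (hpsd : (σ - r • ρ).PosSemidef) :
    Q1 K < P1 K := by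
  classical
  have hMherm : (σ - r • ρ).IsHermitian := hpsd.1
  set eig : dA → ℝ := hMherm.eigenvalues with heig
  set v : dA → dA → ℂ :=
    fun k a => (hMherm.eigenvectorUnitary : Matrix dA dA ℂ) a k with hv
  have hunit : ∀ k, ∑ a, star (v k a) * v k a = 1 := by
    intro k
    have h := Matrix.mem_unitaryGroup_iff'.mp hMherm.eigenvectorUnitary.2
    have h2 := congrFun (congrFun h k) k
    simpa [Matrix.mul_apply, Matrix.one_apply, Matrix.conjTranspose_apply, hv] using h2
  have hψ : ∀ k, IsQState (vecMulVec (v k) (star (v k))) :=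
    fun k => vecMulVec_isQState _ (hunit k)
  have hdecomp : σ - r • ρ = ∑ k, ((eig k : ℝ) : ℂ) • vecMulVec (v k) (star (v k)) := by
    conv_lhs => rw [hMherm.spectral_theorem, Unitary.conjStarAlgAut_apply]
    rw [show star (hMherm.eigenvectorUnitary : Matrix dA dA ℂ)
        = (hMherm.eigenvectorUnitary : Matrix dA dA ℂ)ᴴ from rfl]
    rw [unitary_conj_diag_eq_sum]
    apply Finset.sum_congr rfl; intro k _
    rfl
  have hrsmul : r • ρ = (r : ℂ) • ρ := by
    ext i j
    simp [Matrix.smul_apply, Complex.real_smul]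
  have trM : (σ - r • ρ).trace = ((1 - r : ℝ) : ℂ) := by
    rw [Matrix.trace_sub, hrsmul, Matrix.trace_smul, hσ.2, hρ.2, smul_eq_mul, mul_one]
    push_cast
    ring
  have hsum_eig : ∑ k, eig k = 1 - r := sum_eigenvalues_eq_of_trace hMherm trM
  set n := Fintype.card dA with hn
  set e : Fin n ≃ dA := (Fintype.equivFin dA).symm with he
  set p : Fin (n+1) → ℝ := Fin.cons r (fun k => eig (e k)) with hp
  set σs : Fin (n+1) → Matrix dA dA ℂ :=
    Fin.cons ρ (fun k => vecMulVec (v (e k)) (star (v (e k)))) with hσs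
  have hens : IsEnsemble p σs := by
    refine ⟨?_, ?_, ?_⟩
    · intro i
      refine Fin.cases ?_ ?_ i
      · simp [hp, le_of_lt hr]
      · intro k
        simp only [hp, Fin.cons_succ]
        exact hpsd.eigenvalues_nonneg _
    · rw [hp, Fin.sum_cons,
        Fintype.sum_equiv e _ (fun a => eig a) (fun k => rfl), hsum_eig]
      ring
    · intro i
      refine Fin.cases ?_ ?_ i
      · simpa [hσs] using hρ
      · intro k
        simpa [hσs] using hψ (e k)
  have havg : ∑ i, (p i : ℂ) • σs i = σ := by
    rw [Fin.sum_univ_succ]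
    simp only [hp, hσs, Fin.cons_succ, Fin.cons_zero]
    rw [Fintype.sum_equiv e _
      (fun a => ((eig a : ℝ) : ℂ) • vecMulVec (v a) (star (v a))) (fun k => rfl),
      ← hdecomp, ← hrsmul]
    abel
  have hcoh : ∑ i, p i * cohInfo K (σs i) = r * cohInfo K ρ := by
    rw [Fin.sum_univ_succ]
    simp [hp, hσs, Fin.cons_succ, Fin.cons_zero, cohInfo_pure]
  have hpriv : privInfo K p σs = cohInfo K σ - r * cohInfo K ρ := by
    rw [privInfo, havg, hcoh]
  have hneg : cohInfo K ρ = -cohInfoComp K ρ := by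
    rw [cohInfo, cohInfoComp]; ring
  have hlt : cohInfo K σ < privInfo K p σs := by
    rw [hpriv, hneg]
    nlinarith [mul_pos hr hcomp]
  calc Q1 K = cohInfo K σ := hopt.symm
    _ < privInfo K p σs := hlt
    _ ≤ P1 K := le_P1 K hK hens
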